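/- (Carlitz) For all n ≥ 1, x^n + y^n = ∑_{k=0}^{⌊n/2⌋} q^{k(k-1)/2} · ([n]/[n-k]) · qbinom(n-k,k) · (-xy)^k · r_{n-2k}(x,y). -/

import Mathlib

open Finset

noncomputable section

abbrev K : Type := RatFunc ℚ

def q : K := RatFunc.X

def qint (a : K) (m : ℕ) : K := ∑ i ∈ range m, a ^ i

def qfact (a : K) (m : ℕ) : K := ∏ i ∈ range m, qint a (i + 1)

def qbinom (a : K) (n k : ℕ) : K :=
  if k ≤ n then qfact a n / (qfact a k * qfact a (n - k)) else 0

/-- q-Fibonacci polynomials F_n(x,s,q) with base `a`. -/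
def qF (a x s : K) : ℕ → K
  | 0 => 0
  | n + 1 => ∑ k ∈ range (n / 2 + 1),
      a ^ (k * (k + 1) / 2) * qbinom a (n - k) k * s ^ k * x ^ (n - 2 * k)

/-- q-Lucas polynomials L_n(x,s,q) with base `a` (L_0 = 2). -/
def qL (a x s : K) (n : ℕ) : K :=
  if n = 0 then 2 else
  ∑ k ∈ range (n / 2 + 1),
    a ^ (k * (k - 1) / 2) * (qint a n / qint a (n - k)) * qbinom a (n - k) k
      * s ^ k * x ^ (n - 2 * k)

/-- Starred variant: L*_0 = 1, L*_n = L_n for n > 0. -/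
def qLs (a x s : K) (n : ℕ) : K := if n = 0 then 1 else qL a x s n

/-- Rogers-Szegő polynomial. -/
def rs (a x y : K) (m : ℕ) : K := ∑ j ∈ range (m + 1), qbinom a m j * x ^ j * y ^ (m - j)

/-- q-Pochhammer (q;q)_m. -/
def qpoch (a : K) (m : ℕ) : K := ∏ j ∈ range m, (1 - a ^ (j + 1))

lemma q_pow_sub_one_ne {m : ℕ} (hm : 1 ≤ m) : q ^ m - (1 : K) ≠ 0 := by
  have : (q : K) ^ m - 1 = algebraMap (Polynomial ℚ) K (Polynomial.X ^ m - 1) := by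
    simp [q, map_sub, map_pow, RatFunc.algebraMap_X]
  rw [this]
  intro h
  have h2 : (Polynomial.X ^ m - 1 : Polynomial ℚ) = 0 := by
    apply RatFunc.algebraMap_injective ℚ
    simpa using h
  have := congrArg (Polynomial.eval 0) h2
  simp [Polynomial.eval_pow, zero_pow (by omega : m ≠ 0)] at this

lemma q_sub_one_ne : q - (1 : K) ≠ 0 := by simpa using q_pow_sub_one_ne (le_refl 1)

lemma qint_mul : ∀ m : ℕ, qint q m * (q - 1) = q ^ m - 1 := fun m => geom_sum_mul q m

lemma qint_eq (m : ℕ) : qint q m = (q ^ m - 1) / (q - 1) := by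
  rw [eq_div_iff q_sub_one_ne]; exact qint_mul m

lemma qint_ne {m : ℕ} (hm : 1 ≤ m) : qint q m ≠ 0 := by
  intro h
  have := qint_mul m
  rw [h, zero_mul] at this
  exact q_pow_sub_one_ne hm this.symm

lemma qfact_succ (m : ℕ) : qfact q (m + 1) = qfact q m * qint q (m + 1) :=
  Finset.prod_range_succ _ _

lemma qfact_ne (m : ℕ) : qfact q m ≠ 0 := by
  induction m with
  | zero => simp [qfact]
  | succ k ih => rw [qfact_succ]; exact mul_ne_zero ih (qint_ne (by omega))

lemma qfact_zero : qfact q 0 = 1 := by simp [qfact]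

lemma qbinom_of_le {n k : ℕ} (h : k ≤ n) :
    qbinom q n k = qfact q n / (qfact q k * qfact q (n - k)) := if_pos h

lemma qbinom_of_lt {n k : ℕ} (h : n < k) : qbinom q n k = 0 := if_neg (by omega)

lemma qbinom_zero_right (n : ℕ) : qbinom q n 0 = 1 := by
  rw [qbinom_of_le (Nat.zero_le n), qfact_zero, one_mul, Nat.sub_zero,
    div_self (qfact_ne n)]

lemma qbinom_self (n : ℕ) : qbinom q n n = 1 := by
  rw [qbinom_of_le le_rfl, Nat.sub_self, qfact_zero, mul_one, div_self (qfact_ne n)]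

def uu (n a k : ℕ) : K :=
  (-1) ^ k * q ^ (k * (k - 1) / 2) * (qint q n / qint q (n - k)) * qbinom q (n - k) k
    * qbinom q (n - 2 * k) (a - k)

lemma qpow_tri (j : ℕ) : q ^ ((j + 1) * (j + 1 - 1) / 2) = q ^ (j * (j - 1) / 2) * q ^ j := by
  rw [← pow_add]
  congr 1
  have h1 : (j + 1) * (j + 1 - 1) = j * (j - 1) + 2 * j := by
    cases j with
    | zero => simp
    | succ m => simp [Nat.succ_sub_one]; ring
  have h2 : j * (j - 1) % 2 = 0 := by
    cases j with
    | zero => simp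
    | succ m =>
      obtain ⟨r, hr⟩ := Nat.even_mul_succ_self m
      have h3 : (m + 1) * (m + 1 - 1) = r + r := by rw [Nat.succ_sub_one, mul_comm]; exact hr
      omega
  omega

set_option maxHeartbeats 1000000 in
lemma uu_j (j e c : ℕ) :
    uu (2 * j + 2 + e + c) (j + 1 + e) j
      = ((-1) ^ j * q ^ (j * (j - 1) / 2) * qint q (2 * j + 2 + e + c)
            * qfact q (j + 1 + e + c) * qint q (j + 2 + e + c))
        / (qint q (j + 2 + e + c) * qfact q j * qfact q e * qint q (e + 1)
            * qfact q c * qint q (c + 1)) := by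
  unfold uu
  simp only [show 2 * j + 2 + e + c - j = j + 2 + e + c from by omega,
    show 2 * j + 2 + e + c - 2 * j = e + c + 2 from by omega,
    show j + 1 + e - j = e + 1 from by omega]
  rw [qbinom_of_le (by omega), qbinom_of_le (by omega)]
  simp only [show j + 2 + e + c - j = e + c + 2 from by omega,
    show e + c + 2 - (e + 1) = c + 1 from by omega]
  rw [show qfact q (j + 2 + e + c) = qfact q (j + 1 + e + c) * qint q (j + 2 + e + c) from by
        rw [show j + 2 + e + c = (j + 1 + e + c) + 1 from by omega, qfact_succ],
      show qfact q (e + c + 2) = qfact q (e + c) * qint q (e + c + 1) * qint q (e + c + 2) from by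
        rw [show e + c + 2 = (e + c + 1) + 1 from by omega, qfact_succ, qfact_succ],
      show qfact q (e + 1) = qfact q e * qint q (e + 1) from qfact_succ e,
      show qfact q (c + 1) = qfact q c * qint q (c + 1) from qfact_succ c]
  have i1 : qint q (j + 2 + e + c) ≠ 0 := qint_ne (by omega)
  have i4 : qint q (e + 1) ≠ 0 := qint_ne (by omega)
  have i5 : qint q (c + 1) ≠ 0 := qint_ne (by omega)
  have i6 : qint q (e + c + 1) ≠ 0 := qint_ne (by omega)
  have i7 : qint q (e + c + 2) ≠ 0 := qint_ne (by omega)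
  have hf2 := qfact_ne j
  have hf3 := qfact_ne e
  have hf4 := qfact_ne c
  have hf5 := qfact_ne (e + c)
  simp only [div_mul_eq_mul_div, mul_div_assoc', div_div]
  rw [div_eq_div_iff (by simp only [ne_eq, mul_eq_zero, not_or]; tauto) (by simp only [ne_eq, mul_eq_zero, not_or]; tauto)]
  ring

set_option maxHeartbeats 1000000 in
lemma uu_j1 (j e c : ℕ) :
    uu (2 * j + 2 + e + c) (j + 1 + e) (j + 1)
      = -((-1) ^ j * q ^ (j * (j - 1) / 2) * q ^ j * qint q (2 * j + 2 + e + c)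
            * qfact q (j + 1 + e + c))
        / (qint q (j + 1 + e + c) * qfact q j * qint q (j + 1) * qfact q e * qfact q c) := by
  unfold uu
  simp only [show 2 * j + 2 + e + c - (j + 1) = j + 1 + e + c from by omega,
    show 2 * j + 2 + e + c - 2 * (j + 1) = e + c from by omega,
    show j + 1 + e - (j + 1) = e from by omega]
  rw [qbinom_of_le (by omega), qbinom_of_le (by omega)]
  simp only [show j + 1 + e + c - (j + 1) = e + c from by omega,
    show e + c - e = c from by omega]
  rw [qpow_tri, pow_succ (-1 : K) j]
  rw [show qfact q (j + 1) = qfact q j * qint q (j + 1) from qfact_succ j]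
  have i2 : qint q (j + 1 + e + c) ≠ 0 := qint_ne (by omega)
  have i3 : qint q (j + 1) ≠ 0 := qint_ne (by omega)
  have hf1 := qfact_ne (j + 1 + e + c)
  have hf2 := qfact_ne j
  have hf3 := qfact_ne e
  have hf4 := qfact_ne c
  have hf5 := qfact_ne (e + c)
  simp only [div_mul_eq_mul_div, mul_div_assoc', div_div]
  rw [div_eq_div_iff (by simp only [ne_eq, mul_eq_zero, not_or]; tauto) (by simp only [ne_eq, mul_eq_zero, not_or]; tauto)]
  ring

set_option maxHeartbeats 1000000 in
lemma ratio_id (j e c : ℕ) :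
    uu (2 * j + 2 + e + c) (j + 1 + e) (j + 1)
        * (qint q (j + 1 + e + c) * qint q (j + 1))
      = uu (2 * j + 2 + e + c) (j + 1 + e) j * (-(q ^ j))
          * (qint q (e + 1) * qint q (c + 1)) := by
  rw [uu_j, uu_j1]
  have i1 : qint q (j + 2 + e + c) ≠ 0 := qint_ne (by omega)
  have i2 : qint q (j + 1 + e + c) ≠ 0 := qint_ne (by omega)
  have i3 : qint q (j + 1) ≠ 0 := qint_ne (by omega)
  have i4 : qint q (e + 1) ≠ 0 := qint_ne (by omega)
  have i5 : qint q (c + 1) ≠ 0 := qint_ne (by omega)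
  have hf2 := qfact_ne j
  have hf3 := qfact_ne e
  have hf4 := qfact_ne c
  simp only [← neg_div, div_mul_eq_mul_div, mul_div_assoc', div_div]
  rw [div_eq_div_iff (by simp only [ne_eq, mul_eq_zero, not_or]; tauto)
    (by simp only [ne_eq, mul_eq_zero, not_or]; tauto)]
  ring

set_option maxHeartbeats 1000000 in
lemma local_id (j e c : ℕ) :
    ((1 - q ^ (j + 1 + e)) * (1 - q ^ (j + 1 + c)) - (1 - q ^ j) * (1 - q ^ (j + 2 + e + c)))
        * uu (2 * j + 2 + e + c) (j + 1 + e) j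
      = -((1 - q ^ (j + 1)) * (1 - q ^ (j + 1 + e + c))
          * uu (2 * j + 2 + e + c) (j + 1 + e) (j + 1)) := by
  have hP : qint q (j + 1 + e + c) * qint q (j + 1) ≠ 0 :=
    mul_ne_zero (qint_ne (by omega)) (qint_ne (by omega))
  have hcoef : ((1 - q ^ (j + 1 + e)) * (1 - q ^ (j + 1 + c))
        - (1 - q ^ j) * (1 - q ^ (j + 2 + e + c)))
        * (qint q (j + 1 + e + c) * qint q (j + 1))
      = (1 - q ^ (j + 1)) * (1 - q ^ (j + 1 + e + c)) * q ^ j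
          * (qint q (e + 1) * qint q (c + 1)) := by
    have h1 := q_sub_one_ne
    rw [qint_eq (j + 1 + e + c), qint_eq (j + 1), qint_eq (e + 1), qint_eq (c + 1),
      div_mul_div_comm, div_mul_div_comm]
    simp only [div_mul_eq_mul_div, mul_div_assoc', div_div]
    rw [div_eq_div_iff (by simp only [ne_eq, mul_eq_zero, not_or]; tauto)
      (by simp only [ne_eq, mul_eq_zero, not_or]; tauto)]
    ring
  apply mul_right_cancel₀ hP
  linear_combination (uu (2 * j + 2 + e + c) (j + 1 + e) j) * hcoef
    + ((1 - q ^ (j + 1)) * (1 - q ^ (j + 1 + e + c))) * ratio_id j e c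

lemma one_sub_q_pow_ne {m : ℕ} (hm : 1 ≤ m) : (1 : K) - q ^ m ≠ 0 := by
  intro h
  apply q_pow_sub_one_ne hm
  linear_combination -h

lemma uu_zero {n a k : ℕ} (hka : k ≤ a) (h : n < a + k) : uu n a k = 0 := by
  by_cases h2 : 2 * k ≤ n
  · have hz : qbinom q (n - 2 * k) (a - k) = 0 := qbinom_of_lt (by omega)
    unfold uu; rw [hz, mul_zero]
  · have hz : qbinom q (n - k) k = 0 := qbinom_of_lt (by omega)
    unfold uu; rw [hz]; ring

lemma partial_sum (n a : ℕ) (h0 : 0 < a) (h1 : a < n) :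
    ∀ j, j ≤ a →
      (∑ k ∈ range j, uu n a k) * ((1 - q ^ a) * (1 - q ^ (n - a)))
        = -((1 - q ^ j) * (1 - q ^ (n - j))) * uu n a j := by
  intro j hj
  induction j with
  | zero => simp
  | succ j ih =>
    rw [sum_range_succ, add_mul, ih (by omega)]
    by_cases hc : j + 1 ≤ n - a
    · obtain ⟨e, he⟩ : ∃ e, a = j + 1 + e := ⟨a - (j + 1), by omega⟩
      obtain ⟨c, hc2⟩ : ∃ c, n = 2 * j + 2 + e + c := ⟨n - (2 * j + 2 + e), by omega⟩
      subst he; subst hc2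
      rw [show 2 * j + 2 + e + c - (j + 1 + e) = j + 1 + c from by omega,
        show 2 * j + 2 + e + c - j = j + 2 + e + c from by omega,
        show 2 * j + 2 + e + c - (j + 1) = j + 1 + e + c from by omega]
      linear_combination local_id j e c
    · by_cases hj2 : j = n - a
      · have hu1 : uu n a (j + 1) = 0 := uu_zero (by omega) (by omega)
        subst hj2
        rw [hu1, show n - (n - a + 1) = a - 1 from by omega,
          show n - (n - a) = a from by omega]
        ring
      · have hu0 : uu n a j = 0 := uu_zero (by omega) (by omega)
        have hu1 : uu n a (j + 1) = 0 := uu_zero (by omega) (by omega)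
        rw [hu0, hu1]; ring


lemma uu_diag (n : ℕ) (hn : 1 ≤ n) : uu n n 0 = 1 := by
  unfold uu
  simp [qbinom_zero_right, qbinom_self, div_self (qint_ne hn)]

lemma sumT (n a : ℕ) (hn : 1 ≤ n) (ha : a ≤ n) :
    ∑ k ∈ range (a + 1), uu n a k = if a = 0 ∨ a = n then 1 else 0 := by
  by_cases h0 : a = 0
  · subst h0
    rw [if_pos (Or.inl rfl), Finset.sum_range_one]
    unfold uu
    simp [qbinom_zero_right, div_self (qint_ne hn)]
  · by_cases h1 : a = n
    · subst h1
      rw [if_pos (Or.inr rfl)]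
      rw [Finset.sum_eq_single_of_mem 0 (by simp)]
      · exact uu_diag a hn
      · intro k _ hk
        by_cases h2 : 2 * k ≤ a
        · have hz : qbinom q (a - 2 * k) (a - k) = 0 := qbinom_of_lt (by omega)
          unfold uu; rw [hz, mul_zero]
        · have hz : qbinom q (a - k) k = 0 := qbinom_of_lt (by omega)
          unfold uu; rw [hz]; ring
    · rw [if_neg (by tauto)]
      have hD : ((1 : K) - q ^ a) * (1 - q ^ (n - a)) ≠ 0 :=
        mul_ne_zero (one_sub_q_pow_ne (by omega)) (one_sub_q_pow_ne (by omega))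
      apply mul_right_cancel₀ hD
      rw [sum_range_succ, add_mul, partial_sum n a (by omega) (by omega) a le_rfl, zero_mul]
      ring

theorem stmt11 (x y : K) (n : ℕ) (hn : 1 ≤ n) :
    x ^ n + y ^ n
      = ∑ k ∈ range (n / 2 + 1), q ^ (k * (k - 1) / 2) * (qint q n / qint q (n - k))
          * qbinom q (n - k) k * (-(x * y)) ^ k * rs q x y (n - 2 * k) := by
  symm
  calc
    ∑ k ∈ range (n / 2 + 1), q ^ (k * (k - 1) / 2) * (qint q n / qint q (n - k))
        * qbinom q (n - k) k * (-(x * y)) ^ k * rs q x y (n - 2 * k)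
      = ∑ k ∈ range (n / 2 + 1), ∑ j ∈ range (n - 2 * k + 1),
          q ^ (k * (k - 1) / 2) * (qint q n / qint q (n - k)) * qbinom q (n - k) k
            * (-(x * y)) ^ k * (qbinom q (n - 2 * k) j * x ^ j * y ^ (n - 2 * k - j)) := by
        refine Finset.sum_congr rfl fun k _ => ?_
        rw [rs, Finset.mul_sum]
    _ = ∑ k ∈ range (n / 2 + 1), ∑ j ∈ range (n + 1),
          q ^ (k * (k - 1) / 2) * (qint q n / qint q (n - k)) * qbinom q (n - k) k
            * (-(x * y)) ^ k * (qbinom q (n - 2 * k) j * x ^ j * y ^ (n - 2 * k - j)) := by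
        refine Finset.sum_congr rfl fun k hk => ?_
        simp only [Finset.mem_range] at hk
        refine Finset.sum_subset (Finset.range_subset_range.mpr (by omega)) fun j hj hj' => ?_
        simp only [Finset.mem_range, not_lt] at hj'
        rw [qbinom_of_lt (show n - 2 * k < j from by omega)]
        ring
    _ = ∑ k ∈ range (n + 1), ∑ j ∈ range (n + 1),
          q ^ (k * (k - 1) / 2) * (qint q n / qint q (n - k)) * qbinom q (n - k) k
            * (-(x * y)) ^ k * (qbinom q (n - 2 * k) j * x ^ j * y ^ (n - 2 * k - j)) := by
        refine Finset.sum_subset (Finset.range_subset_range.mpr (by omega)) fun k _ hk => ?_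
        simp only [Finset.mem_range, not_lt] at hk
        rw [qbinom_of_lt (show n - k < k from by omega)]
        simp [Finset.mul_sum]
    _ = ∑ k ∈ range (n + 1), ∑ a ∈ Finset.Ico k (n + 1 + k),
          q ^ (k * (k - 1) / 2) * (qint q n / qint q (n - k)) * qbinom q (n - k) k
            * (-(x * y)) ^ k * (qbinom q (n - 2 * k) (a - k) * x ^ (a - k)
                * y ^ (n - 2 * k - (a - k))) := by
        refine Finset.sum_congr rfl fun k _ => ?_
        rw [Finset.sum_Ico_eq_sum_range]
        simp only [Nat.add_sub_cancel, Nat.add_sub_cancel_left]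
    _ = ∑ k ∈ range (n + 1), ∑ a ∈ Finset.Ico k (n + 1),
          q ^ (k * (k - 1) / 2) * (qint q n / qint q (n - k)) * qbinom q (n - k) k
            * (-(x * y)) ^ k * (qbinom q (n - 2 * k) (a - k) * x ^ (a - k)
                * y ^ (n - 2 * k - (a - k))) := by
        refine Finset.sum_congr rfl fun k hk => ?_
        simp only [Finset.mem_range] at hk
        refine (Finset.sum_subset (Finset.Ico_subset_Ico_right (by omega)) fun a ha ha' => ?_).symm
        simp only [Finset.mem_Ico] at ha ha'
        by_cases h2 : 2 * k ≤ n
        · rw [qbinom_of_lt (show n - 2 * k < a - k from by omega)]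
          ring
        · rw [qbinom_of_lt (show n - k < k from by omega)]
          ring
    _ = ∑ a ∈ range (n + 1), ∑ k ∈ range (a + 1),
          q ^ (k * (k - 1) / 2) * (qint q n / qint q (n - k)) * qbinom q (n - k) k
            * (-(x * y)) ^ k * (qbinom q (n - 2 * k) (a - k) * x ^ (a - k)
                * y ^ (n - 2 * k - (a - k))) := by
        rw [Finset.range_eq_Ico, Finset.sum_Ico_Ico_comm]
        simp only [Finset.range_eq_Ico]
    _ = ∑ a ∈ range (n + 1), x ^ a * y ^ (n - a) * ∑ k ∈ range (a + 1), uu n a k := by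
        refine Finset.sum_congr rfl fun a ha => ?_
        rw [Finset.mul_sum]
        refine Finset.sum_congr rfl fun k hk => ?_
        simp only [Finset.mem_range] at ha hk
        by_cases hc : a + k ≤ n
        · unfold uu
          rw [show n - 2 * k - (a - k) = n - a - k from by omega, neg_pow, mul_pow]
          have hx : x ^ k * x ^ (a - k) = x ^ a := by
            rw [← pow_add]; congr 1; omega
          have hy : y ^ k * y ^ (n - a - k) = y ^ (n - a) := by
            rw [← pow_add]; congr 1; omega
          rw [← hx, ← hy]
          ring
        · rw [uu_zero (by omega) (by omega), mul_zero]
          by_cases h2 : 2 * k ≤ n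
          · rw [qbinom_of_lt (show n - 2 * k < a - k from by omega)]
            ring
          · rw [qbinom_of_lt (show n - k < k from by omega)]
            ring
    _ = ∑ a ∈ range (n + 1), x ^ a * y ^ (n - a)
          * (if a = 0 ∨ a = n then (1 : K) else 0) := by
        refine Finset.sum_congr rfl fun a ha => ?_
        simp only [Finset.mem_range] at ha
        rw [sumT n a hn (by omega)]
    _ = ∑ a ∈ ({0, n} : Finset ℕ), x ^ a * y ^ (n - a)
          * (if a = 0 ∨ a = n then (1 : K) else 0) := by
        refine (Finset.sum_subset (by
          intro a ha
          simp only [Finset.mem_insert, Finset.mem_singleton] at ha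
          simp only [Finset.mem_range]
          omega) fun a ha ha' => ?_).symm
        simp only [Finset.mem_insert, Finset.mem_singleton] at ha'
        rw [if_neg (by tauto), mul_zero]
    _ = x ^ n + y ^ n := by
        rw [Finset.sum_pair (show (0 : ℕ) ≠ n from by omega)]
        simp [Nat.sub_self]
        ring
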